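/- Let A and B be n×n complex normal matrices with eigenvalues λ₁,…,λₙ and μ₁,…,μₙ respectively (each list counted with multiplicity, in some order). Then there exists a permutation π of {1,…,n} such that ∑_{i=1}^{n} |λᵢ − μ_{π(i)}|² ≤ ‖A − B‖_F². -/

import Mathlib

open Polynomial Matrix

noncomputable section

namespace HW


lemma normal_eigenbasis {E : Type*} [NormedAddCommGroup E] [InnerProductSpace ℂ E]
    [FiniteDimensional ℂ E] {n : ℕ} (hn : Module.finrank ℂ E = n)
    (T : E →ₗ[ℂ] E) (hc : Commute T (star T)) :
    ∃ (b : OrthonormalBasis (Fin n) ℂ E) (d : Fin n → ℂ), ∀ j, T (b j) = d j • b j := by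
  classical
  set S : E →ₗ[ℂ] E := star T with hS
  have hTstar : star T = S := rfl
  have hSstar : star S = T := star_star T
  set H : E →ₗ[ℂ] E := (2:ℂ)⁻¹ • (T + S) with hHdef
  set K : E →ₗ[ℂ] E := (2*Complex.I)⁻¹ • (T - S) with hKdef
  have hHsa : _root_.IsSelfAdjoint H := by
    unfold _root_.IsSelfAdjoint
    rw [hHdef, star_smul, star_add, hTstar, hSstar]
    simp [add_comm]
  have hKsa : _root_.IsSelfAdjoint K := by
    unfold _root_.IsSelfAdjoint
    rw [hKdef, star_smul, star_sub, hTstar, hSstar]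
    rw [show star ((2*Complex.I)⁻¹) = -((2*Complex.I)⁻¹) by
      simp [Complex.ext_iff]]
    rw [neg_smul, ← smul_neg, neg_sub]
  have hH : H.IsSymmetric := (LinearMap.isSymmetric_iff_isSelfAdjoint H).mpr hHsa
  have hK : K.IsSymmetric := (LinearMap.isSymmetric_iff_isSelfAdjoint K).mpr hKsa
  have hHK : Commute H K := by
    apply Commute.smul_left
    apply Commute.smul_right
    exact ((Commute.refl T).sub_right hc).add_left ((hc.symm).sub_right (Commute.refl S))
  have hTHK : T = H + Complex.I • K := by
    rw [hHdef, hKdef, smul_smul]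
    rw [show Complex.I * (2*Complex.I)⁻¹ = (2:ℂ)⁻¹ by
      field_simp]
    rw [← smul_add]
    rw [show (T + S) + (T - S) = (2:ℂ) • T by
      ext x; simp [two_smul]]
    rw [smul_smul]
    norm_num
  set V : ℂ × ℂ → Submodule ℂ E :=
    fun i => Module.End.eigenspace H i.2 ⊓ Module.End.eigenspace K i.1 with hV
  have L : DirectSum.IsInternal V :=
    LinearMap.IsSymmetric.directSum_isInternal_of_commute hH hK hHK
  have hfam : OrthogonalFamily ℂ (fun i : ℂ × ℂ => ↥(V i)) (fun i => (V i).subtypeₗᵢ) :=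
    LinearMap.IsSymmetric.orthogonalFamily_eigenspace_inf_eigenspace hH hK
  have hind : iSupIndep V :=
    ((DirectSum.isInternal_submodule_iff_iSupIndep_and_iSup_eq_top V).mp L).1
  have hfin : {i : ℂ × ℂ | V i ≠ ⊥}.Finite := WellFoundedGT.finite_ne_bot_of_iSupIndep hind
  haveI : Fintype {i : ℂ × ℂ // V i ≠ ⊥} := hfin.fintype
  have L' : DirectSum.IsInternal (fun i : {i : ℂ × ℂ // V i ≠ ⊥} => V i) :=
    DirectSum.isInternal_ne_bot_iff.mpr L
  have hfam' : OrthogonalFamily ℂ (fun i : {i : ℂ × ℂ // V i ≠ ⊥} => ↥(V i.1))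
      (fun i => (V i.1).subtypeₗᵢ) := hfam.comp Subtype.val_injective
  let b := L'.collectedOrthonormalBasis hfam'
    (fun i => stdOrthonormalBasis ℂ (V i.1))
  have hcard : Fintype.card
      (Σ i : {i : ℂ × ℂ // V i ≠ ⊥}, Fin (Module.finrank ℂ ↥(V i.1))) = n := by
    rw [← Module.finrank_eq_card_basis b.toBasis, hn]
  let e := Fintype.equivFinOfCardEq hcard
  refine ⟨b.reindex e, fun j => (e.symm j).1.1.2 + Complex.I * (e.symm j).1.1.1, fun j => ?_⟩
  have hmem : b (e.symm j) ∈ V (e.symm j).1 :=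
    L'.collectedOrthonormalBasis_mem hfam' (fun i => stdOrthonormalBasis ℂ (V i.1)) (e.symm j)
  have hb' : (b.reindex e) j = b (e.symm j) := b.reindex_apply e j
  rw [hb']
  have hmem2 : b (e.symm j) ∈ Module.End.eigenspace H (e.symm j).1.1.2 ⊓
      Module.End.eigenspace K (e.symm j).1.1.1 := hmem
  obtain ⟨hmH, hmK⟩ := Submodule.mem_inf.mp hmem2
  have hmH' := Module.End.mem_eigenspace_iff.mp hmH
  have hmK' := Module.End.mem_eigenspace_iff.mp hmK
  rw [hTHK]
  simp only [LinearMap.add_apply, LinearMap.smul_apply, hmH', hmK', smul_smul, ← add_smul]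

lemma spectral {n : ℕ} (A : Matrix (Fin n) (Fin n) ℂ) (hA : A * Aᴴ = Aᴴ * A) :
    ∃ (U : Matrix (Fin n) (Fin n) ℂ) (d : Fin n → ℂ),
      Uᴴ * U = 1 ∧ U * Uᴴ = 1 ∧ A = U * Matrix.diagonal d * Uᴴ := by
  classical
  have hmul : ∀ (M N : Matrix (Fin n) (Fin n) ℂ),
      Matrix.toEuclideanLin (M * N) = (Matrix.toEuclideanLin M) * (Matrix.toEuclideanLin N) := by
    intro M N
    ext x
    simp [Matrix.toEuclideanLin_apply, Matrix.mulVec_mulVec, Module.End.mul_apply]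
  have hstar : star (Matrix.toEuclideanLin A) = Matrix.toEuclideanLin Aᴴ := by
    rw [LinearMap.star_eq_adjoint, Matrix.toEuclideanLin_conjTranspose_eq_adjoint]
  have hc : Commute (Matrix.toEuclideanLin A) (star (Matrix.toEuclideanLin A)) := by
    rw [Commute, SemiconjBy, hstar, ← hmul, ← hmul, hA]
  obtain ⟨b, d, hb⟩ := normal_eigenbasis (finrank_euclideanSpace_fin)
    (Matrix.toEuclideanLin A) hc
  set U : Matrix (Fin n) (Fin n) ℂ := Matrix.of (fun i j => b j i) with hU
  have hUU : Uᴴ * U = 1 := by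
    ext i j
    have h2 : (inner ℂ (b i) (b j) : ℂ) = if i = j then 1 else 0 :=
      orthonormal_iff_ite.mp b.orthonormal i j
    simp only [PiLp.inner_apply, RCLike.inner_apply] at h2
    simpa [Matrix.mul_apply, Matrix.conjTranspose_apply, Matrix.one_apply, hU,
      mul_comm] using h2
  have hUUt : U * Uᴴ = 1 := mul_eq_one_comm.mp hUU
  have hAU : A * U = U * Matrix.diagonal d := by
    ext i j
    have h1 := congrArg (fun v : EuclideanSpace ℂ (Fin n) => v i) (hb j)
    simp only [Matrix.toEuclideanLin_apply] at h1
    have h3 : (A *ᵥ (fun l => b j l)) i = d j * b j i := by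
      simpa [PiLp.smul_apply, smul_eq_mul] using h1
    simpa [Matrix.mul_apply, Matrix.mulVec, dotProduct, hU, Matrix.diagonal,
      mul_comm] using h3
  refine ⟨U, d, hUU, hUUt, ?_⟩
  calc A = A * (U * Uᴴ) := by rw [hUUt, mul_one]
  _ = (A * U) * Uᴴ := by rw [mul_assoc]
  _ = U * Matrix.diagonal d * Uᴴ := by rw [hAU]



lemma charpoly_conj {n : ℕ} (U M V : Matrix (Fin n) (Fin n) ℂ) (hUV : U * V = 1) :
    (U * M * V).charpoly = M.charpoly := by
  have hVU : V * U = 1 := mul_eq_one_comm.mp hUV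
  unfold Matrix.charpoly
  have key : charmatrix (U * M * V) =
      (C : ℂ →+* ℂ[X]).mapMatrix U * charmatrix M * (C : ℂ →+* ℂ[X]).mapMatrix V := by
    unfold charmatrix
    rw [Matrix.mul_sub, Matrix.sub_mul]
    congr 1
    · rw [mul_assoc, (Matrix.scalar_commute (X : ℂ[X]) (fun r => Commute.all X r)
        ((C : ℂ →+* ℂ[X]).mapMatrix V)).eq, ← mul_assoc, ← RingHom.map_mul, hUV,
        RingHom.map_one, one_mul]
    · rw [← RingHom.map_mul, ← RingHom.map_mul]
  have hdet : ((C : ℂ →+* ℂ[X]).mapMatrix U).det * ((C : ℂ →+* ℂ[X]).mapMatrix V).det = 1 := by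
    rw [← Matrix.det_mul, ← RingHom.map_mul, hUV, RingHom.map_one, Matrix.det_one]
  rw [key, Matrix.det_mul, Matrix.det_mul]
  linear_combination M.charmatrix.det * hdet

lemma charpoly_diagonal {n : ℕ} (d : Fin n → ℂ) :
    (Matrix.diagonal d).charpoly = ∏ i, (X - C (d i)) := by
  unfold Matrix.charpoly
  have : charmatrix (Matrix.diagonal d) = Matrix.diagonal (fun i => (X : ℂ[X]) - C (d i)) := by
    ext i j
    by_cases h : i = j
    · subst h; simp [charmatrix_apply_eq]
    · simp [charmatrix_apply_ne _ _ _ h, Matrix.diagonal_apply_ne _ h]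
  rw [this, Matrix.det_diagonal]

lemma exists_perm_of_multiset_map_eq {α : Type*} : ∀ {n : ℕ} (f g : Fin n → α),
    Multiset.map f Finset.univ.val = Multiset.map g Finset.univ.val →
    ∃ σ : Equiv.Perm (Fin n), ∀ i, f i = g (σ i) := by
  intro n
  induction n with
  | zero => exact fun f g _ => ⟨1, fun i => i.elim0⟩
  | succ n ih =>
    intro f g h
    have h0 : f 0 ∈ Multiset.map g Finset.univ.val := by
      rw [← h]
      exact Multiset.mem_map.mpr ⟨0, Finset.mem_univ_val 0, rfl⟩
    obtain ⟨j, -, hj⟩ := Multiset.mem_map.mp h0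
    have hdec : ∀ (p : Fin (n+1)) (q : Fin (n+1) → α),
        Multiset.map q Finset.univ.val
          = q p ::ₘ Multiset.map (fun k => q (Fin.succAbove p k)) Finset.univ.val := by
      intro p q
      rw [show (Finset.univ : Finset (Fin (n+1)))
          = Finset.cons p (Finset.univ.map <| Fin.succAboveEmb p) (by simp)
        from Fin.univ_succAbove n p]
      rw [Finset.cons_val, Multiset.map_cons, Finset.map_val, Multiset.map_map]
      rfl
    have h' : Multiset.map (fun k => f (Fin.succAbove 0 k)) Finset.univ.val
        = Multiset.map (fun k => g (Fin.succAbove j k)) Finset.univ.val := by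
      have := h
      rw [hdec 0 f, hdec j g, hj] at this
      exact (Multiset.cons_inj_right _).mp this
    obtain ⟨τ, hτ⟩ := ih _ _ h'
    set φ : Fin (n+1) → Fin (n+1) :=
      fun i => Fin.cases j (fun k => Fin.succAbove j (τ k)) i with hφ
    have hinj : Function.Injective φ := by
      intro a b hab
      rcases Fin.eq_zero_or_eq_succ a with rfl | ⟨a', rfl⟩ <;>
        rcases Fin.eq_zero_or_eq_succ b with rfl | ⟨b', rfl⟩
      · rfl
      · rw [hφ] at hab
        simp only [Fin.cases_zero, Fin.cases_succ] at hab
        exact absurd hab.symm (Fin.succAbove_ne j (τ b'))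
      · rw [hφ] at hab
        simp only [Fin.cases_zero, Fin.cases_succ] at hab
        exact absurd hab (Fin.succAbove_ne j (τ a'))
      · rw [hφ] at hab
        simp only [Fin.cases_succ] at hab
        have h2 : a' = b' := τ.injective ((Fin.succAbove_right_injective (p := j)) hab)
        rw [h2]
    obtain ⟨σ, hσ⟩ : ∃ σ : Equiv.Perm (Fin (n+1)), ∀ i, σ i = φ i :=
      ⟨Equiv.ofBijective φ (Finite.injective_iff_bijective.mp hinj), fun _ => rfl⟩
    refine ⟨σ, fun i => ?_⟩
    rcases Fin.eq_zero_or_eq_succ i with rfl | ⟨k, rfl⟩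
    · rw [hσ, hφ]; simpa using hj.symm
    · rw [hσ, hφ]; simpa using hτ k



lemma frob_formula {n : ℕ} (W : Matrix (Fin n) (Fin n) ℂ) (hW : Wᴴ * W = 1) (hW2 : W * Wᴴ = 1)
    (d f : Fin n → ℂ) :
    ((Matrix.diagonal d - W * Matrix.diagonal f * Wᴴ)ᴴ *
      (Matrix.diagonal d - W * Matrix.diagonal f * Wᴴ)).trace.re
      = ∑ j, ∑ l, Complex.normSq (W j l) * Complex.normSq (d j - f l) := by
  classical
  set D := Matrix.diagonal d with hD
  set Y := W * Matrix.diagonal f * Wᴴ with hY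
  have hWW : ∀ Z : Matrix (Fin n) (Fin n) ℂ, Wᴴ * (W * Z) = Z := fun Z => by
    rw [← mul_assoc, hW, one_mul]
  -- expansion of the product
  have e1 : (D - Y)ᴴ * (D - Y) = (Dᴴ * D + Yᴴ * Y) - (Dᴴ * Y + Yᴴ * D) := by
    rw [conjTranspose_sub]
    rw [Matrix.sub_mul, Matrix.mul_sub, Matrix.mul_sub]
    abel
  have tr1 : (Dᴴ * D).trace = ∑ j, (Complex.normSq (d j) : ℂ) := by
    rw [hD, Matrix.diagonal_conjTranspose, Matrix.diagonal_mul_diagonal, Matrix.trace_diagonal]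
    exact Finset.sum_congr rfl fun j _ => by
      rw [Pi.star_apply, Complex.star_def, mul_comm, Complex.mul_conj]
  have hYconj : Yᴴ = W * Matrix.diagonal (star f) * Wᴴ := by
    rw [hY, conjTranspose_mul, conjTranspose_mul, conjTranspose_conjTranspose,
      Matrix.diagonal_conjTranspose, mul_assoc]
  have tr4 : (Yᴴ * Y).trace = ∑ l, (Complex.normSq (f l) : ℂ) := by
    rw [hYconj, hY]
    rw [show W * Matrix.diagonal (star f) * Wᴴ * (W * Matrix.diagonal f * Wᴴ)
        = W * (Matrix.diagonal (star f) * Matrix.diagonal f) * Wᴴ by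
      simp only [mul_assoc, hWW]]
    rw [Matrix.trace_mul_cycle, hW, one_mul, Matrix.diagonal_mul_diagonal, Matrix.trace_diagonal]
    exact Finset.sum_congr rfl fun j _ => by
      rw [Pi.star_apply, Complex.star_def, mul_comm, Complex.mul_conj]
  have hYdiag : ∀ j, Y j j = ∑ l, W j l * f l * star (W j l) := by
    intro j
    rw [hY, Matrix.mul_apply]
    exact Finset.sum_congr rfl fun l _ => by
      rw [Matrix.mul_diagonal, Matrix.conjTranspose_apply]
  have tr2 : (Dᴴ * Y).trace = ∑ j, ∑ l, star (d j) * (W j l * f l * star (W j l)) := by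
    rw [Matrix.trace]
    refine Finset.sum_congr rfl fun j _ => ?_
    rw [Matrix.diag_apply, hD, Matrix.diagonal_conjTranspose, Matrix.diagonal_mul, hYdiag j, Finset.mul_sum]
    exact Finset.sum_congr rfl fun l _ => by rw [Pi.star_apply]
  have tr3 : (Yᴴ * D).trace = star ((Dᴴ * Y).trace) := by
    rw [← Matrix.trace_conjTranspose]
    congr 1
    conv_rhs => rw [conjTranspose_mul, conjTranspose_conjTranspose]
  -- real row and column sums
  have hrow : ∀ j, ∑ l, Complex.normSq (W j l) = 1 := by
    intro j
    have h := congrFun (congrFun hW2 j) j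
    simp only [Matrix.mul_apply, Matrix.one_apply_eq, Matrix.conjTranspose_apply] at h
    have h2 : ∑ l, (Complex.normSq (W j l) : ℂ) = 1 := by
      rw [← h]
      exact Finset.sum_congr rfl fun l _ => (Complex.mul_conj (W j l)).symm
    exact_mod_cast h2
  have hcol : ∀ l, ∑ j, Complex.normSq (W j l) = 1 := by
    intro l
    have h := congrFun (congrFun hW l) l
    simp only [Matrix.mul_apply, Matrix.one_apply_eq, Matrix.conjTranspose_apply] at h
    have h2 : ∑ j, (Complex.normSq (W j l) : ℂ) = 1 := by
      rw [← h]
      exact Finset.sum_congr rfl fun j _ => by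
        rw [Complex.star_def]
        exact Complex.normSq_eq_conj_mul_self (z := W j l)
    exact_mod_cast h2
  -- put it together
  rw [e1]
  rw [Matrix.trace_sub, Matrix.trace_add, Matrix.trace_add, tr1, tr2, tr3, tr4, tr2]
  have hre : ∀ (z : ℂ), (z + star z).re = 2 * z.re := fun z => by
    simp [Complex.add_re]
    ring
  rw [Complex.sub_re, Complex.add_re, hre]
  have h2re : (∑ j, ∑ l, star (d j) * (W j l * f l * star (W j l))).re
      = ∑ j, ∑ l, Complex.normSq (W j l) * (star (d j) * f l).re := by
    rw [Complex.re_sum]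
    refine Finset.sum_congr rfl fun j _ => ?_
    rw [Complex.re_sum]
    refine Finset.sum_congr rfl fun l _ => ?_
    rw [show star (d j) * (W j l * f l * star (W j l))
        = (W j l * star (W j l)) * (star (d j) * f l) by ring]
    rw [show W j l * star (W j l) = (Complex.normSq (W j l) : ℂ) from Complex.mul_conj _]
    rw [Complex.re_ofReal_mul]
  rw [h2re]
  have hsq : ∀ j l, Complex.normSq (W j l) * Complex.normSq (d j - f l)
      = Complex.normSq (W j l) * Complex.normSq (d j)
        + Complex.normSq (W j l) * Complex.normSq (f l)
        - 2 * (Complex.normSq (W j l) * (star (d j) * f l).re) := by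
    intro j l
    simp only [Complex.normSq_apply, Complex.sub_re, Complex.sub_im, Complex.mul_re,
      Complex.star_def, Complex.conj_re, Complex.conj_im]
    ring
  have hcast : ∀ (g : Fin n → ℝ), (∑ j, (g j : ℂ)).re = ∑ j, g j := fun g => by
    rw [Complex.re_sum]; exact Finset.sum_congr rfl fun j _ => Complex.ofReal_re _
  rw [hcast, hcast]
  have e2 : ∑ j, ∑ l, Complex.normSq (W j l) * Complex.normSq (d j - f l)
      = (∑ j, Complex.normSq (d j)) + (∑ l, Complex.normSq (f l))
        - 2 * ∑ j, ∑ l, Complex.normSq (W j l) * (star (d j) * f l).re := by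
    simp only [hsq, Finset.sum_sub_distrib, Finset.sum_add_distrib, ← Finset.mul_sum]
    congr 1
    congr 1
    · exact Finset.sum_congr rfl fun j _ => by rw [← Finset.sum_mul, hrow, one_mul]
    · rw [Finset.sum_comm]
      exact Finset.sum_congr rfl fun l _ => by rw [← Finset.sum_mul, hcol, one_mul]
  rw [e2]



lemma birkhoff_min {n : ℕ} (S : Matrix (Fin n) (Fin n) ℝ) (hS : S ∈ doublyStochastic ℝ (Fin n))
    (c : Fin n → Fin n → ℝ) :
    ∃ σ : Equiv.Perm (Fin n), ∑ j, c j (σ j) ≤ ∑ j, ∑ l, S j l * c j l := by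
  classical
  obtain ⟨w, hw0, hw1, hwS⟩ := exists_eq_sum_perm_of_mem_doublyStochastic hS
  have hval : ∀ σ : Equiv.Perm (Fin n),
      (∑ j, ∑ l, (σ.permMatrix ℝ) j l * c j l) = ∑ j, c j (σ j) := by
    intro σ
    refine Finset.sum_congr rfl fun j _ => ?_
    have : ∀ l, (σ.permMatrix ℝ) j l = if σ j = l then 1 else 0 := by
      intro l
      simp [Equiv.Perm.permMatrix, PEquiv.toMatrix_apply, Equiv.toPEquiv_apply, eq_comm]
    simp only [this, ite_mul, one_mul, zero_mul]
    rw [Finset.sum_ite_eq Finset.univ (σ j) (fun l => c j l)]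
    simp
  have hexp : ∑ j, ∑ l, S j l * c j l = ∑ σ : Equiv.Perm (Fin n), w σ * ∑ j, c j (σ j) := by
    have hentry : ∀ j l, S j l = ∑ σ : Equiv.Perm (Fin n), w σ * (σ.permMatrix ℝ) j l := by
      intro j l
      rw [← hwS]
      rw [Matrix.sum_apply]
      exact Finset.sum_congr rfl fun σ _ => rfl
    calc ∑ j, ∑ l, S j l * c j l
        = ∑ j, ∑ l, ∑ σ : Equiv.Perm (Fin n), w σ * (σ.permMatrix ℝ) j l * c j l := by
          refine Finset.sum_congr rfl fun j _ => Finset.sum_congr rfl fun l _ => ?_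
          rw [hentry j l, Finset.sum_mul]
    _ = ∑ σ : Equiv.Perm (Fin n), ∑ j, ∑ l, w σ * (σ.permMatrix ℝ) j l * c j l := by
          rw [show (∑ j, ∑ l, ∑ σ : Equiv.Perm (Fin n), w σ * (σ.permMatrix ℝ) j l * c j l)
              = ∑ j, ∑ σ : Equiv.Perm (Fin n), ∑ l, w σ * (σ.permMatrix ℝ) j l * c j l from
            Finset.sum_congr rfl fun j _ => Finset.sum_comm]
          exact Finset.sum_comm
    _ = ∑ σ : Equiv.Perm (Fin n), w σ * ∑ j, c j (σ j) := by
          refine Finset.sum_congr rfl fun σ _ => ?_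
          rw [← hval σ, Finset.mul_sum]
          refine Finset.sum_congr rfl fun j _ => ?_
          rw [Finset.mul_sum]
          exact Finset.sum_congr rfl fun l _ => by ring
  by_contra hcon
  push_neg at hcon
  have hlt : ∀ σ : Equiv.Perm (Fin n),
      ∑ j, ∑ l, S j l * c j l < ∑ j, c j (σ j) := hcon
  obtain ⟨σ₀, -, hσ₀⟩ := Finset.exists_ne_zero_of_sum_ne_zero (by rw [hw1]; norm_num :
    ∑ σ : Equiv.Perm (Fin n), w σ ≠ 0)
  have : ∑ σ : Equiv.Perm (Fin n), w σ * (∑ j, ∑ l, S j l * c j l)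
      < ∑ σ : Equiv.Perm (Fin n), w σ * ∑ j, c j (σ j) := by
    refine Finset.sum_lt_sum (fun σ _ => ?_) ⟨σ₀, Finset.mem_univ σ₀, ?_⟩
    · exact mul_le_mul_of_nonneg_left (hlt σ).le (hw0 σ)
    · exact mul_lt_mul_of_pos_left (hlt σ₀) ((hw0 σ₀).lt_of_ne' hσ₀)
  rw [← Finset.sum_mul, hw1, one_mul, ← hexp] at this
  exact lt_irrefl _ this


end HW

/-- Squared Frobenius norm of a complex matrix: `‖M‖_F² = trace (Mᴴ * M)`. -/
def frobSqC {ι : Type*} [Fintype ι] (M : Matrix ι ι ℂ) : ℝ := (Mᴴ * M).trace.re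

/-- **The Hoffman–Wielandt inequality.** If `A` and `B` are `n × n` complex normal matrices
with eigenvalues `λ₁, …, λₙ` and `μ₁, …, μₙ` (with multiplicity), then there is a
permutation `π` with `∑ i, |λᵢ - μ_{π i}|² ≤ ‖A - B‖_F²`. -/
theorem hoffman_wielandt {n : ℕ} (A B : Matrix (Fin n) (Fin n) ℂ)
    (hA : A * Aᴴ = Aᴴ * A) (hB : B * Bᴴ = Bᴴ * B)
    (lam mu : Fin n → ℂ)
    (hlam : A.charpoly = ∏ i, (X - C (lam i)))
    (hmu : B.charpoly = ∏ i, (X - C (mu i))) :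
    ∃ π : Equiv.Perm (Fin n),
      ∑ i, ‖lam i - mu (π i)‖ ^ 2 ≤ frobSqC (A - B) := by
  classical
  obtain ⟨U, d, hUU, hUUt, hAdec⟩ := HW.spectral A hA
  obtain ⟨V, f, hVV, hVVt, hBdec⟩ := HW.spectral B hB
  -- identify eigenvalues up to permutation
  have hms : ∀ (g h : Fin n → ℂ), (∏ i, (X - C (g i))) = (∏ i, (X - C (h i))) →
      ∃ τ : Equiv.Perm (Fin n), ∀ i, g i = h (τ i) := by
    intro g h hgh
    apply HW.exists_perm_of_multiset_map_eq
    have h1 : (Multiset.map (fun a => (X : ℂ[X]) - C a) (Multiset.map g Finset.univ.val)).prod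
        = (Multiset.map (fun a => (X : ℂ[X]) - C a) (Multiset.map h Finset.univ.val)).prod := by
      rw [Multiset.map_map, Multiset.map_map]
      exact hgh
    have := congrArg Polynomial.roots h1
    rwa [Polynomial.roots_multiset_prod_X_sub_C, Polynomial.roots_multiset_prod_X_sub_C] at this
  have hcpA : (∏ i, (X - C (lam i))) = ∏ i, (X - C (d i)) := by
    rw [← hlam, hAdec, HW.charpoly_conj U (Matrix.diagonal d) Uᴴ hUUt, HW.charpoly_diagonal]
  have hcpB : (∏ i, (X - C (mu i))) = ∏ i, (X - C (f i)) := by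
    rw [← hmu, hBdec, HW.charpoly_conj V (Matrix.diagonal f) Vᴴ hVVt, HW.charpoly_diagonal]
  obtain ⟨τ, hτ⟩ := hms lam d hcpA
  obtain ⟨ρ, hρ⟩ := hms mu f hcpB
  -- the unitary W and the difference
  set W : Matrix (Fin n) (Fin n) ℂ := Uᴴ * V with hWdef
  have hWconj : Wᴴ = Vᴴ * U := by
    rw [hWdef, conjTranspose_mul, conjTranspose_conjTranspose]
  have hW : Wᴴ * W = 1 := by
    rw [hWconj, hWdef]
    calc Vᴴ * U * (Uᴴ * V) = Vᴴ * (U * Uᴴ) * V := by simp only [Matrix.mul_assoc]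
    _ = 1 := by rw [hUUt, mul_one, hVV]
  have hW2 : W * Wᴴ = 1 := mul_eq_one_comm.mp hW
  set M : Matrix (Fin n) (Fin n) ℂ :=
    Matrix.diagonal d - W * Matrix.diagonal f * Wᴴ with hMdef
  have hdiff : A - B = U * M * Uᴴ := by
    rw [hMdef, Matrix.mul_sub, Matrix.sub_mul, ← hAdec]
    congr 1
    rw [hBdec, hWconj, hWdef]
    symm
    calc U * (Uᴴ * V * Matrix.diagonal f * (Vᴴ * U)) * Uᴴ
        = (U * Uᴴ) * (V * Matrix.diagonal f * Vᴴ) * (U * Uᴴ) := by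
          simp only [Matrix.mul_assoc]
    _ = V * Matrix.diagonal f * Vᴴ := by
          rw [hUUt, one_mul, mul_one]
  -- Frobenius norm computation
  have hUUe : ∀ Z : Matrix (Fin n) (Fin n) ℂ, Uᴴ * (U * Z) = Z := fun Z => by
    rw [← Matrix.mul_assoc, hUU, one_mul]
  have htrc : ∀ (P Q : Matrix (Fin n) (Fin n) ℂ), Pᴴ * P = 1 →
      ((P * Q * Pᴴ)ᴴ * (P * Q * Pᴴ)).trace = (Qᴴ * Q).trace := by
    intro P Q hP
    have hPe : ∀ Z : Matrix (Fin n) (Fin n) ℂ, Pᴴ * (P * Z) = Z := fun Z => by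
      rw [← Matrix.mul_assoc, hP, one_mul]
    have e : (P * Q * Pᴴ)ᴴ * (P * Q * Pᴴ) = P * (Qᴴ * Q) * Pᴴ := by
      simp only [conjTranspose_mul, conjTranspose_conjTranspose, Matrix.mul_assoc, hPe]
    rw [e, Matrix.trace_mul_cycle, hP, one_mul]
  have hfrob : frobSqC (A - B)
      = ∑ j, ∑ l, Complex.normSq (W j l) * Complex.normSq (d j - f l) := by
    rw [← HW.frob_formula W hW hW2 d f, ← hMdef]
    unfold frobSqC
    rw [hdiff]
    rw [htrc U M hUU]
  -- doubly stochastic matrix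
  set S : Matrix (Fin n) (Fin n) ℝ := Matrix.of fun j l => Complex.normSq (W j l) with hSdef
  have hrow : ∀ j, ∑ l, Complex.normSq (W j l) = 1 := by
    intro j
    have h := congrFun (congrFun hW2 j) j
    simp only [Matrix.mul_apply, Matrix.one_apply_eq, Matrix.conjTranspose_apply] at h
    have h2 : ∑ l, (Complex.normSq (W j l) : ℂ) = 1 := by
      rw [← h]
      exact Finset.sum_congr rfl fun l _ => (Complex.mul_conj (W j l)).symm
    exact_mod_cast h2
  have hcol : ∀ l, ∑ j, Complex.normSq (W j l) = 1 := by
    intro l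
    have h := congrFun (congrFun hW l) l
    simp only [Matrix.mul_apply, Matrix.one_apply_eq, Matrix.conjTranspose_apply] at h
    have h2 : ∑ j, (Complex.normSq (W j l) : ℂ) = 1 := by
      rw [← h]
      exact Finset.sum_congr rfl fun j _ => by
        rw [Complex.star_def]
        exact Complex.normSq_eq_conj_mul_self (z := W j l)
    exact_mod_cast h2
  have hSmem : S ∈ doublyStochastic ℝ (Fin n) := by
    rw [mem_doublyStochastic_iff_sum]
    exact ⟨fun i j => Complex.normSq_nonneg _, fun i => hrow i, fun j => hcol j⟩
  obtain ⟨σ, hσ⟩ := HW.birkhoff_min S hSmem (fun j l => Complex.normSq (d j - f l))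
  refine ⟨ρ⁻¹ * σ * τ, ?_⟩
  have hsum : ∑ i, ‖lam i - mu ((ρ⁻¹ * σ * τ) i)‖ ^ 2
      = ∑ j, Complex.normSq (d j - f (σ j)) := by
    rw [show ∑ j, Complex.normSq (d j - f (σ j))
        = ∑ i, Complex.normSq (d (τ i) - f (σ (τ i))) from (Equiv.sum_comp τ _).symm]
    refine Finset.sum_congr rfl fun i _ => ?_
    rw [Complex.sq_norm, hτ i, hρ ((ρ⁻¹ * σ * τ) i)]
    congr 2
    simp [Equiv.Perm.mul_apply]
  rw [hsum, hfrob]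
  exact hσ
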